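/- Let (Z_t)_{t≥1} be a real-valued process adapted to a filtration (F_t) satisfying the (1,k,p)-block martingale small-ball condition: for every t, P(|Z_{t+1}| ≥ k | F_t) ≥ p. Then for every integer T ≥ 1, P(Σ_{t=1}^T Z_t² ≤ k²p²T/8) ≤ exp(-Tp²/8). -/

import Mathlib

open MeasureTheory ProbabilityTheory

/-- Small-ball lower-tail bound (Simchowitz et al., Prop. 2.5): if the adapted real
process `(Z_t)` satisfies the `(1,k,p)` block martingale small-ball condition
`P(|Z_{t+1}| ≥ k | F_t) ≥ p` a.s. for all `t`, then for every `T ≥ 1`,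
`P(Σ_{t=1}^T Z_t² ≤ k²p²T/8) ≤ exp(-Tp²/8)`. -/
theorem stmt_18
    {Ω : Type*} {mΩ : MeasurableSpace Ω} (P : Measure Ω) [IsProbabilityMeasure P]
    (F : Filtration ℕ mΩ) (Z : ℕ → Ω → ℝ)
    (hadapted : ∀ t, Measurable[F t] (Z t))
    (k p : ℝ) (hk : 0 < k) (hp0 : 0 < p) (hp1 : p ≤ 1)
    (hBMSB : ∀ t : ℕ, ∀ᵐ ω ∂P,
      p ≤ (P[Set.indicator {ω' | k ≤ |Z (t + 1) ω'|} (fun _ => (1 : ℝ)) | F t]) ω)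
    (T : ℕ) (hT : 1 ≤ T) :
    P {ω | ∑ t ∈ Finset.Icc 1 T, (Z t ω) ^ 2 ≤ k ^ 2 * p ^ 2 * T / 8}
      ≤ ENNReal.ofReal (Real.exp (-(T : ℝ) * p ^ 2 / 8)) := by
  classical
  set B : ℕ → Ω → ℝ := fun t => Set.indicator {ω' | k ≤ |Z t ω'|} (fun _ => (1 : ℝ)) with hBdef
  set c : ℝ := 1 - Real.exp (-1) with hcdef
  have hexp1 : Real.exp (-1) < 1 / 2 := by
    rw [Real.exp_neg]
    rw [inv_lt_comm₀ (Real.exp_pos 1) (by norm_num)]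
    have := Real.exp_one_gt_d9
    norm_num at this ⊢
    linarith
  have hexp0 : (0 : ℝ) < Real.exp (-1) := Real.exp_pos _
  have hc0 : (0 : ℝ) < c := by simp only [hcdef]; linarith
  have hc1 : c < 1 := by simp only [hcdef]; linarith
  have hcp0 : 0 ≤ 1 - c * p := by nlinarith
  -- basic facts about B
  have hB01 : ∀ t ω, B t ω = 0 ∨ B t ω = 1 := by
    intro t ω
    by_cases h : ω ∈ {ω' | k ≤ |Z t ω'|}
    · right; simp [hBdef, Set.indicator_of_mem h]
    · left; simp [hBdef, Set.indicator_of_notMem h]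
  have hBnn : ∀ t ω, 0 ≤ B t ω := by
    intro t ω; rcases hB01 t ω with h | h <;> rw [h] <;> norm_num
  have hBle1 : ∀ t ω, B t ω ≤ 1 := by
    intro t ω; rcases hB01 t ω with h | h <;> rw [h] <;> norm_num
  have hBmeasF : ∀ t, Measurable[F t] (B t) := by
    intro t
    have habs : Measurable[F t] fun ω => |Z t ω| := measurable_abs.comp (hadapted t)
    have hS : MeasurableSet[F t] {ω' | k ≤ |Z t ω'|} := habs measurableSet_Ici
    exact measurable_const.indicator hS
  have hBmeas : ∀ t, Measurable (B t) := fun t => (hBmeasF t).mono (F.le t) le_rfl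
  have hBint : ∀ t, Integrable (B t) P := by
    intro t
    exact ⟨(hBmeas t).aestronglyMeasurable,
      HasFiniteIntegral.of_bounded (C := 1) (ae_of_all _ fun ω => by
        rw [Real.norm_eq_abs, abs_of_nonneg (hBnn t ω)]; exact hBle1 t ω)⟩
  have hexpB : ∀ t ω, Real.exp (-(B t ω)) = 1 - c * B t ω := by
    intro t ω
    rcases hB01 t ω with h | h <;> rw [h] <;> simp [hcdef]
  -- the partial "mgf" process
  set S : ℕ → Ω → ℝ := fun n ω => ∑ t ∈ Finset.Icc 1 n, B t ω with hSdef
  set f : ℕ → Ω → ℝ := fun n ω => Real.exp (-(S n ω)) with hfdef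
  have hSmeasF : ∀ n, Measurable[F n] (S n) := by
    intro n
    apply Finset.measurable_sum
    intro t ht
    exact (hBmeasF t).mono (F.mono (Finset.mem_Icc.mp ht).2) le_rfl
  have hfmeasF : ∀ n, Measurable[F n] (f n) := fun n =>
    (Real.measurable_exp.comp (hSmeasF n).neg)
  have hfmeas : ∀ n, Measurable (f n) := fun n => (hfmeasF n).mono (F.le n) le_rfl
  have hfnn : ∀ n ω, 0 ≤ f n ω := fun n ω => (Real.exp_pos _).le
  have hfle1 : ∀ n ω, f n ω ≤ 1 := by
    intro n ω
    rw [hfdef]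
    simp only
    rw [Real.exp_le_one_iff, neg_nonpos]
    exact Finset.sum_nonneg fun t _ => hBnn t ω
  have hfint : ∀ n, Integrable (f n) P := by
    intro n
    exact ⟨(hfmeas n).aestronglyMeasurable,
      HasFiniteIntegral.of_bounded (C := 1) (ae_of_all _ fun ω => by
        rw [Real.norm_eq_abs, abs_of_nonneg (hfnn n ω)]; exact hfle1 n ω)⟩
  -- key induction
  have key : ∀ n, ∫ ω, f n ω ∂P ≤ (1 - c * p) ^ n := by
    intro n
    induction n with
    | zero =>
      simp [hfdef, hSdef]
    | succ n ih =>
      have hsplit : ∀ ω, f (n + 1) ω = f n ω * (1 - c * B (n + 1) ω) := by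
        intro ω
        rw [hfdef]
        simp only
        rw [hSdef]
        simp only
        rw [Finset.sum_Icc_succ_top (Nat.le_add_left 1 n), neg_add, Real.exp_add, hexpB]
      have hfBint : Integrable (fun ω => f n ω * B (n + 1) ω) P := by
        refine (hBint (n + 1)).bdd_mul (c := 1) (hfmeas n).aestronglyMeasurable (ae_of_all _ fun ω => ?_)
        rw [Real.norm_eq_abs, abs_of_nonneg (hfnn n ω)]; exact hfle1 n ω
      -- pull-out property
      have hpull : P[(fun ω => f n ω * B (n + 1) ω) | F n] =ᵐ[P]
          fun ω => f n ω * (P[B (n + 1) | F n]) ω := by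
        exact condExp_mul_of_stronglyMeasurable_left (hfmeasF n).stronglyMeasurable hfBint (hBint (n + 1))
      have hint_eq : ∫ ω, f n ω * B (n + 1) ω ∂P
          = ∫ ω, f n ω * (P[B (n + 1) | F n]) ω ∂P :=
        calc ∫ ω, f n ω * B (n + 1) ω ∂P
            = ∫ ω, (P[fun ω => f n ω * B (n + 1) ω | F n]) ω ∂P :=
              (integral_condExp (F.le n)).symm
          _ = ∫ ω, f n ω * (P[B (n + 1) | F n]) ω ∂P := integral_congr_ae hpull
      have hcond_int : Integrable (fun ω => f n ω * (P[B (n + 1) | F n]) ω) P := by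
        refine integrable_condExp.bdd_mul (c := 1) (hfmeas n).aestronglyMeasurable (ae_of_all _ fun ω => ?_)
        rw [Real.norm_eq_abs, abs_of_nonneg (hfnn n ω)]; exact hfle1 n ω
      have hlow : p * ∫ ω, f n ω ∂P ≤ ∫ ω, f n ω * B (n + 1) ω ∂P := by
        rw [hint_eq, ← integral_const_mul]
        refine integral_mono_ae ((hfint n).const_mul p) hcond_int ?_
        filter_upwards [hBMSB n] with ω hω
        have : p * f n ω ≤ f n ω * (P[B (n + 1) | F n]) ω := by
          rw [mul_comm]
          exact mul_le_mul_of_nonneg_left hω (hfnn n ω)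
        exact this
      have hstep : ∫ ω, f (n + 1) ω ∂P ≤ (1 - c * p) * ∫ ω, f n ω ∂P := by
        have : ∫ ω, f (n + 1) ω ∂P
            = ∫ ω, f n ω ∂P - c * ∫ ω, f n ω * B (n + 1) ω ∂P := by
          rw [← integral_const_mul, ← integral_sub (hfint n) (hfBint.const_mul c)]
          exact integral_congr_ae (ae_of_all _ fun ω => by rw [hsplit ω]; ring)
        rw [this]
        have h2 : c * (p * ∫ ω, f n ω ∂P) ≤ c * ∫ ω, f n ω * B (n + 1) ω ∂P :=
          mul_le_mul_of_nonneg_left hlow hc0.le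
        linarith
      have hfnn' : 0 ≤ ∫ ω, f n ω ∂P := integral_nonneg fun ω => hfnn n ω
      calc ∫ ω, f (n + 1) ω ∂P ≤ (1 - c * p) * ∫ ω, f n ω ∂P := hstep
        _ ≤ (1 - c * p) * (1 - c * p) ^ n := mul_le_mul_of_nonneg_left ih hcp0
        _ = (1 - c * p) ^ (n + 1) := by ring
  -- events
  set a : ℝ := p ^ 2 * T / 8 with hadef
  have haT : 0 < (T : ℝ) := by exact_mod_cast hT
  have ha0 : 0 ≤ a := by positivity
  set A' : Set Ω := {ω | S T ω ≤ a} with hA'def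
  have hA'meas : MeasurableSet A' :=
    measurableSet_le ((hSmeasF T).mono (F.le T) le_rfl) measurable_const
  have hsub : {ω | ∑ t ∈ Finset.Icc 1 T, (Z t ω) ^ 2 ≤ k ^ 2 * p ^ 2 * T / 8} ⊆ A' := by
    intro ω hω
    simp only [Set.mem_setOf_eq] at hω ⊢
    have hterm : ∀ t ∈ Finset.Icc 1 T, k ^ 2 * B t ω ≤ (Z t ω) ^ 2 := by
      intro t _
      by_cases h : ω ∈ {ω' | k ≤ |Z t ω'|}
      · have hkz : k ≤ |Z t ω| := h
        have : k ^ 2 ≤ |Z t ω| ^ 2 := pow_le_pow_left₀ hk.le hkz 2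
        rw [sq_abs] at this
        simp only [hBdef, Set.indicator_of_mem h]
        linarith
      · simp only [hBdef, Set.indicator_of_notMem h, mul_zero]
        positivity
    have hsum : k ^ 2 * S T ω ≤ ∑ t ∈ Finset.Icc 1 T, (Z t ω) ^ 2 := by
      rw [hSdef]
      simp only
      rw [Finset.mul_sum]
      exact Finset.sum_le_sum hterm
    have hk2 : (0 : ℝ) < k ^ 2 := by positivity
    rw [hA'def, hadef]
    simp only [Set.mem_setOf_eq]
    nlinarith [hω, hsum]
  -- Markov
  have hmarkov : Real.exp (-a) * (P A').toReal ≤ ∫ ω, f T ω ∂P := by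
    have h1 : ∫ ω in A', f T ω ∂P ≤ ∫ ω, f T ω ∂P :=
      setIntegral_le_integral (hfint T) (ae_of_all _ fun ω => hfnn T ω)
    have h2 : ∫ ω in A', Real.exp (-a) ∂P ≤ ∫ ω in A', f T ω ∂P := by
      refine setIntegral_mono_on (integrableOn_const)
        ((hfint T).integrableOn) hA'meas fun ω hω => ?_
      rw [hfdef]
      exact Real.exp_le_exp.mpr (neg_le_neg hω)
    have h3 : ∫ ω in A', Real.exp (-a) ∂P = (P A').toReal * Real.exp (-a) := by
      rw [setIntegral_const]; rw [smul_eq_mul]; rfl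
    rw [mul_comm]
    linarith
  have hkey2 : (P A').toReal ≤ Real.exp (-a) := by
    have hbound : (1 - c * p) ^ T ≤ Real.exp (-(c * p) * (T : ℝ)) := by
      have h1 : 1 - c * p ≤ Real.exp (-(c * p)) := by
        have := Real.add_one_le_exp (-(c * p))
        linarith
      calc (1 - c * p) ^ T ≤ Real.exp (-(c * p)) ^ T := pow_le_pow_left₀ hcp0 h1 T
        _ = Real.exp ((T : ℝ) * (-(c * p))) := (Real.exp_nat_mul _ T).symm
        _ = Real.exp (-(c * p) * (T : ℝ)) := by ring_nf
    have hchain : Real.exp (-a) * (P A').toReal ≤ Real.exp (-(c * p) * (T : ℝ)) :=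
      le_trans hmarkov (le_trans (key T) hbound)
    have hc4 : p / 4 ≤ c := by
      rw [hcdef]; nlinarith
    have hfinal : Real.exp (-(c * p) * (T : ℝ)) ≤ Real.exp (-a) * Real.exp (-a) := by
      rw [← Real.exp_add, Real.exp_le_exp, hadef]
      have h2a : 2 * (p ^ 2 * (T : ℝ) / 8) ≤ c * p * (T : ℝ) := by nlinarith
      linarith
    have hE : 0 < Real.exp (-a) := Real.exp_pos _
    nlinarith [hchain, hfinal, ENNReal.toReal_nonneg (a := P A')]
  calc P {ω | ∑ t ∈ Finset.Icc 1 T, (Z t ω) ^ 2 ≤ k ^ 2 * p ^ 2 * T / 8}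
      ≤ P A' := measure_mono hsub
    _ = ENNReal.ofReal (P A').toReal := (ENNReal.ofReal_toReal (measure_ne_top P _)).symm
    _ ≤ ENNReal.ofReal (Real.exp (-(T : ℝ) * p ^ 2 / 8)) := by
        refine ENNReal.ofReal_le_ofReal ?_
        have : -(T : ℝ) * p ^ 2 / 8 = -a := by rw [hadef]; ring
        rw [this]
        exact hkey2
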